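/- arXiv:2503.13810 — 3 statements merged into one kernel-verified Lean document; each statement's English description precedes it below -/
import Mathlib

section
/- If p > 3/4 and ℓ_inf(α) > 1/(4p−2), then B_∞² = Σ_{k=1}^∞ 1/a_k² < ∞. -/
open MeasureTheory ProbabilityTheory Filter

noncomputable section

/-- The increments `X_n := S_n - S_{n-1}` of the walk. -/
def derwX {Ω : Type*} (S : ℕ → Ω → ℝ) (n : ℕ) (ω : Ω) : ℝ := S n ω - S (n - 1) ω

/-- The natural filtration `F_n^X = σ(X_1, …, X_n)` of the increments. -/
def derwF {Ω : Type*} (S : ℕ → Ω → ℝ) (n : ℕ) : MeasurableSpace Ω :=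
  ⨆ k ∈ Finset.Icc 1 n, MeasurableSpace.comap (derwX S k) Real.measurableSpace

/-- The dynamic elephant random walk (DERW) with parameters `p, q ∈ [0,1]` and
sequences `α, β` in `[0,1]` (indexed from 1). -/
structure IsDERW {Ω : Type*} [MeasurableSpace Ω] (μ : Measure Ω)
    (p q : ℝ) (α β : ℕ → ℝ) (S : ℕ → Ω → ℝ) : Prop where
  hp : p ∈ Set.Icc (0 : ℝ) 1
  hq : q ∈ Set.Icc (0 : ℝ) 1
  hα : ∀ n, α n ∈ Set.Icc (0 : ℝ) 1
  hβ : ∀ n, β n ∈ Set.Icc (0 : ℝ) 1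
  hS0 : ∀ ω, S 0 ω = 0
  hmeas : ∀ n, Measurable (derwX S n)
  hpm : ∀ n, 1 ≤ n → ∀ ω, derwX S n ω = 1 ∨ derwX S n ω = -1
  hE1 : ∫ ω, derwX S 1 ω ∂μ = α 1 * (2 * q - 1) + (1 - α 1) * (2 * β 1 - 1)
  hCE : ∀ n, 1 ≤ n → μ[derwX S (n + 1) | derwF S n]
      =ᵐ[μ] fun ω => α (n + 1) * (2 * p - 1) / (n : ℝ) * S n ω
        + (1 - α (n + 1)) * (2 * β (n + 1) - 1)

/-- `a_n := ∏_{k=1}^{n-1} (1 + (2p-1) α_{k+1} / k)`, with `a_1 = 1`. -/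
def derwa (p : ℝ) (α : ℕ → ℝ) (n : ℕ) : ℝ :=
  ∏ k ∈ Finset.Ico 1 n, (1 + (2 * p - 1) * α (k + 1) / (k : ℝ))

/-- `A_n² := ∑_{k=1}^n (1 - E[X_k]²) / a_k²`. -/
def derwAsq {Ω : Type*} [MeasurableSpace Ω] (μ : Measure Ω) (p : ℝ) (α : ℕ → ℝ)
    (S : ℕ → Ω → ℝ) (n : ℕ) : ℝ :=
  ∑ k ∈ Finset.Icc 1 n, (1 - (∫ ω, derwX S k ω ∂μ) ^ 2) / derwa p α k ^ 2

/-- `A_∞² := ∑_{k=1}^∞ (1 - E[X_k]²) / a_k²`. -/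
def derwAsqInf {Ω : Type*} [MeasurableSpace Ω] (μ : Measure Ω) (p : ℝ) (α : ℕ → ℝ)
    (S : ℕ → Ω → ℝ) : ℝ :=
  ∑' k : ℕ, (1 - (∫ ω, derwX S (k + 1) ω ∂μ) ^ 2) / derwa p α (k + 1) ^ 2

/-- The martingale `M_n := (S_n - E[S_n]) / a_n` (note `M_0 = 0` since `S_0 = 0`). -/
def derwM {Ω : Type*} [MeasurableSpace Ω] (μ : Measure Ω) (p : ℝ) (α : ℕ → ℝ)
    (S : ℕ → Ω → ℝ) (n : ℕ) (ω : Ω) : ℝ :=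
  (S n ω - ∫ ω', S n ω' ∂μ) / derwa p α n

/-- The martingale differences `Y_n := M_n - M_{n-1}`. -/
def derwY {Ω : Type*} [MeasurableSpace Ω] (μ : Measure Ω) (p : ℝ) (α : ℕ → ℝ)
    (S : ℕ → Ω → ℝ) (n : ℕ) (ω : Ω) : ℝ :=
  derwM μ p α S n ω - derwM μ p α S (n - 1) ω

/-- `s_n² := ∑_{k=n}^∞ E[Y_k²]`. -/
def derwssq {Ω : Type*} [MeasurableSpace Ω] (μ : Measure Ω) (p : ℝ) (α : ℕ → ℝ)
    (S : ℕ → Ω → ℝ) (n : ℕ) : ℝ :=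
  ∑' k : ℕ, ∫ ω, derwY μ p α S (n + k) ω ^ 2 ∂μ

theorem derw_B_finite (p : ℝ) (α : ℕ → ℝ)
    (hp' : p ∈ Set.Icc (0 : ℝ) 1) (hα' : ∀ n, α n ∈ Set.Icc (0 : ℝ) 1)
    (hp : 3 / 4 < p) (hα : 1 / (4 * p - 2) < liminf α atTop) :
    Summable fun k : ℕ => 1 / derwa p α (k + 1) ^ 2 := by
  set r : ℝ := 2 * p - 1 with hr_def
  have hr : 1 / 2 < r := by simp only [hr_def]; linarith
  have hr1 : r ≤ 1 := by simp only [hr_def]; linarith [hp'.2]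
  have hr0 : 0 < r := by linarith
  -- choose ℓ with 1/(4p-2) < ℓ < liminf α
  obtain ⟨ℓ, hℓ1, hℓ2⟩ := exists_between hα
  have hbdd : IsBoundedUnder (· ≥ ·) atTop α :=
    Filter.isBoundedUnder_of ⟨0, fun n => (hα' n).1⟩
  have hℓ1' : ℓ ≤ 1 := by
    have : liminf α atTop ≤ 1 :=
      Filter.liminf_le_of_frequently_le
        (Filter.Eventually.frequently (Filter.Eventually.of_forall fun n => (hα' n).2))
        hbdd
    linarith
  have hℓ0 : 0 < ℓ := lt_trans (div_pos one_pos (by linarith)) hℓ1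
  -- c := r * ℓ, with 1/2 < c ≤ 1
  set c : ℝ := r * ℓ with hc_def
  have hc : 1 / 2 < c := by
    have h4 : 4 * p - 2 = 2 * r := by simp [hr_def]; ring
    rw [h4] at hℓ1
    have := (div_lt_iff₀ (by linarith : (0:ℝ) < 2 * r)).1 hℓ1
    rw [hc_def]; nlinarith
  have hc1 : c ≤ 1 := by
    rw [hc_def]
    calc r * ℓ ≤ 1 * 1 := mul_le_mul hr1 hℓ1' hℓ0.le (by norm_num)
    _ = 1 := by ring
  have hc0 : 0 < c := by linarith
  -- N with α m > ℓ for m ≥ N, and N ≥ 1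
  obtain ⟨N₀, hN₀⟩ := (Filter.eventually_atTop.1 (eventually_lt_of_lt_liminf hℓ2 hbdd))
  set N : ℕ := max N₀ 1 with hN_def
  have hN1 : 1 ≤ N := le_max_right _ _
  have hNpos : (0:ℝ) < N := by exact_mod_cast hN1
  have hαℓ : ∀ k, N ≤ k → ℓ ≤ α (k + 1) := by
    intro k hk
    have h1 : N₀ ≤ k := le_trans (le_max_left N₀ 1) hk
    exact (hN₀ (k+1) (by omega)).le
  -- each factor is ≥ 1
  have hfac : ∀ k : ℕ, (1:ℝ) ≤ 1 + r * α (k + 1) / (k : ℝ) := by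
    intro k
    have : (0:ℝ) ≤ r * α (k + 1) / (k : ℝ) := by
      apply div_nonneg (mul_nonneg hr0.le (hα' (k+1)).1) (Nat.cast_nonneg _)
    linarith
  have ha_one : ∀ n, (1:ℝ) ≤ derwa p α n := by
    intro n
    calc (1:ℝ) = ∏ _k ∈ Finset.Ico 1 n, (1:ℝ) := by simp
      _ ≤ _ := Finset.prod_le_prod (fun _ _ => zero_le_one) (fun k _ => hfac k)
  have ha_pos : ∀ n, (0:ℝ) < derwa p α n := fun n => lt_of_lt_of_le one_pos (ha_one n)
  -- key growth bound: for n ≥ N, (n/N)^c ≤ a_n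
  have key : ∀ n, N ≤ n → ((n : ℝ) / N) ^ c ≤ derwa p α n := by
    intro n hn
    induction n, hn using Nat.le_induction with
    | base => rw [div_self hNpos.ne', Real.one_rpow]; exact ha_one N
    | succ n hn ih =>
      have hn1 : 1 ≤ n := le_trans hN1 hn
      have hnpos : (0:ℝ) < n := by exact_mod_cast hn1
      have hstep : derwa p α (n+1) = derwa p α n * (1 + r * α (n + 1) / (n : ℝ)) := by
        rw [derwa, Finset.prod_Ico_succ_top hn1]; rfl
      rw [hstep]
      have hsplit : ((n+1 : ℕ) : ℝ) / N = ((n : ℝ) / N) * ((n+1 : ℝ) / n) := by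
        push_cast
        field_simp
      rw [hsplit, Real.mul_rpow (by positivity) (by positivity)]
      have hbern : ((n+1 : ℝ) / n) ^ c ≤ 1 + r * α (n + 1) / (n : ℝ) := by
        have h1 : ((n+1 : ℝ) / n) = 1 + 1/(n:ℝ) := by field_simp
        rw [h1]
        calc (1 + 1/(n:ℝ)) ^ c ≤ 1 + c * (1/(n:ℝ)) :=
              rpow_one_add_le_one_add_mul_self (le_trans (by norm_num : (-1:ℝ) ≤ 0) (by positivity)) hc0.le hc1
          _ ≤ 1 + r * α (n + 1) / (n : ℝ) := by
              have : c ≤ r * α (n + 1) := by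
                rw [hc_def]
                exact mul_le_mul_of_nonneg_left (hαℓ n hn) hr0.le
              rw [mul_one_div]
              gcongr
      exact mul_le_mul ih hbern (Real.rpow_nonneg (by positivity) _) (ha_pos n).le
  -- comparison bound for all m ≥ 1
  have hbound : ∀ m : ℕ, 1 ≤ m → 1 / derwa p α m ^ 2 ≤ ((N : ℝ) / m) ^ (2 * c) := by
    intro m hm
    have hmpos : (0:ℝ) < m := by exact_mod_cast hm
    rcases le_or_gt N m with h | h
    · have h1 : ((m : ℝ) / N) ^ (2 * c) ≤ derwa p α m ^ 2 := by
        have := key m h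
        calc ((m : ℝ) / N) ^ (2 * c) = (((m : ℝ) / N) ^ c) ^ (2:ℕ) := by
              rw [← Real.rpow_natCast (((m : ℝ) / N) ^ c) 2, ← Real.rpow_mul (by positivity)]
              norm_num [mul_comm]
          _ ≤ derwa p α m ^ 2 := by
              apply pow_le_pow_left₀ (by positivity) this
      have h2 : (0:ℝ) < ((m : ℝ) / N) ^ (2 * c) := Real.rpow_pos_of_pos (by positivity) _
      calc 1 / derwa p α m ^ 2 ≤ 1 / ((m : ℝ) / N) ^ (2 * c) := by
            apply one_div_le_one_div_of_le h2 h1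
        _ = ((N : ℝ) / m) ^ (2 * c) := by
            rw [one_div, ← Real.rpow_neg_one, ← Real.rpow_mul (by positivity)]
            rw [show ((N : ℝ) / m) = ((m : ℝ)/N)⁻¹ by rw [inv_div],
              Real.inv_rpow (by positivity), ← Real.rpow_neg_one ((_ : ℝ) ^ _),
              ← Real.rpow_mul (by positivity)]
      
    · have : (1:ℝ) ≤ ((N : ℝ) / m) ^ (2 * c) := by
        apply Real.one_le_rpow _ (by linarith)
        rw [le_div_iff₀ hmpos, one_mul]
        exact_mod_cast h.le
      calc 1 / derwa p α m ^ 2 ≤ 1 := by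
            rw [div_le_one (pow_pos (ha_pos m) 2)]
            exact one_le_pow₀ (ha_one m)
        _ ≤ _ := this
  -- summability of the bound
  have hsum : Summable fun k : ℕ => ((N:ℝ)) ^ (2*c) * ((k+1 : ℝ)) ^ (-(2*c)) := by
    apply Summable.mul_left
    have : Summable fun n : ℕ => ((n : ℝ)) ^ (-(2*c)) :=
      Real.summable_nat_rpow.2 (by linarith)
    have := (summable_nat_add_iff 1).2 this
    simpa using this
  apply Summable.of_nonneg_of_le (fun k => by positivity) _ hsum
  intro k
  have := hbound (k+1) (by omega)
  calc 1 / derwa p α (k+1) ^ 2 ≤ ((N : ℝ) / (k+1 : ℕ)) ^ (2 * c) := this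
    _ = ((N:ℝ)) ^ (2*c) * ((k+1 : ℝ)) ^ (-(2*c)) := by
        rw [Real.div_rpow (Nat.cast_nonneg _) (Nat.cast_nonneg _), Real.rpow_neg (by positivity),
          div_eq_mul_inv]
        push_cast
        ring_nf
end
end

section
/- Suppose one of the following three conditions holds: (1) p < 1 and ℓ_inf(α) > 0; (2) p = 1, 0 < ℓ_inf(α) ≤ ℓ_sup(α) < 1 and 0 < ℓ_inf(β) ≤ ℓ_sup(β) < (1−ℓ_sup(α))/(1−ℓ_inf(α)); (3) 0 = ℓ_inf(α) ≤ ℓ_sup(α) < 1 and 0 < ℓ_inf(β) ≤ ℓ_sup(β) < 1 − p·ℓ_sup(α). Then liminf_{n→∞} Var[X_n] > 0. -/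
open MeasureTheory ProbabilityTheory Filter

noncomputable section

lemma drift_lemma (w : ℕ → ℝ) (T r : ℝ) (hr : 0 < r) (N : ℕ)
    (hstep : ∀ n, N ≤ n → ∃ c : ℝ, r ≤ c ∧ c ≤ (n : ℝ) + 1 ∧
      w (n+1) ≤ w n + c * (T - w n) / ((n : ℝ) + 1)) :
    ∀ ε > 0, ∀ᶠ n in atTop, w n ≤ T + ε := by
  intro ε hε
  obtain ⟨n₀, hn₀N, hn₀⟩ : ∃ n₀, N ≤ n₀ ∧ w n₀ ≤ T + ε := by
    by_contra hcon
    push_neg at hcon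
    have key : ∀ k : ℕ, w (N + k) + r * ε * (∑ j ∈ Finset.range k, 1 / ((N : ℝ) + j + 1)) ≤ w N := by
      intro k
      induction k with
      | zero => simp
      | succ k ih =>
        obtain ⟨c, hc1, hc2, hc3⟩ := hstep (N + k) (Nat.le_add_right N k)
        have hlt := hcon (N + k) (Nat.le_add_right N k)
        have hpos : (0 : ℝ) < (N : ℝ) + k + 1 := by positivity
        have hc3' : w (N + k + 1) ≤ w (N + k) + c * (T - w (N + k)) / ((N : ℝ) + k + 1) := by
          convert hc3 using 3 <;> push_cast <;> ring
        have h3 : w (N + (k + 1)) ≤ w (N + k) - r * ε / ((N : ℝ) + k + 1) := by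
          have hnum : c * (T - w (N + k)) ≤ -(r * ε) := by nlinarith
          have : c * (T - w (N + k)) / ((N : ℝ) + k + 1) ≤ -(r * ε) / ((N : ℝ) + k + 1) := by
            apply div_le_div_of_nonneg_right hnum hpos.le
          rw [show N + (k + 1) = N + k + 1 from rfl]
          rw [neg_div] at this
          linarith
        rw [Finset.sum_range_succ, mul_add]
        push_cast at h3 ih ⊢
        have ht : r * ε * (1 / ((N:ℝ) + k + 1)) = r * ε / ((N:ℝ) + k + 1) := by ring
        linarith [h3, ih, ht]
    have hdiv : Tendsto (fun k => ∑ j ∈ Finset.range k, 1 / ((N : ℝ) + j + 1)) atTop atTop := by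
      have hH := Real.tendsto_sum_range_one_div_nat_succ_atTop
      have hident : ∀ k : ℕ, ∑ j ∈ Finset.range k, 1 / ((N : ℝ) + j + 1)
          = (∑ i ∈ Finset.range (N + k), 1 / ((i : ℝ) + 1)) + -(∑ i ∈ Finset.range N, 1 / ((i : ℝ) + 1)) := by
        intro k
        induction k with
        | zero => simp
        | succ k ih =>
          rw [Finset.sum_range_succ, ih, show N + (k+1) = (N + k) + 1 from rfl, Finset.sum_range_succ]
          push_cast
          ring
      have h1 : Tendsto (fun k : ℕ => ∑ i ∈ Finset.range (N + k), 1 / ((i : ℝ) + 1)) atTop atTop := by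
        have : Tendsto (fun k : ℕ => N + k) atTop atTop := by
          simpa [Nat.add_comm] using tendsto_add_atTop_nat N
        exact hH.comp this
      have h2 := tendsto_atTop_add_const_right atTop (-(∑ i ∈ Finset.range N, 1 / ((i : ℝ) + 1))) h1
      exact Tendsto.congr (fun k => (hident k).symm) h2
    have hrε : 0 < r * ε := by positivity
    obtain ⟨k, hk⟩ := (hdiv.eventually_ge_atTop ((w N - T - ε) / (r * ε) + 1)).exists
    have hlt := hcon (N + k) (Nat.le_add_right N k)
    have hkey := key k
    have h6 : w N - T - ε + r * ε ≤ r * ε * (∑ j ∈ Finset.range k, 1 / ((N : ℝ) + j + 1)) := by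
      have := mul_le_mul_of_nonneg_left hk hrε.le
      rw [mul_add, mul_one, mul_div_cancel₀ _ (ne_of_gt hrε)] at this
      linarith
    linarith
  rw [eventually_atTop]
  refine ⟨n₀, ?_⟩
  intro n hn
  induction n, hn using Nat.le_induction with
  | base => exact hn₀
  | succ n hn ih =>
    obtain ⟨c, hc1, hc2, hc3⟩ := hstep n (hn₀N.trans hn)
    have hpos : (0 : ℝ) < (n : ℝ) + 1 := by positivity
    have h4 : w n + c * (T - w n) / ((n : ℝ) + 1) ≤ T + ε := by
      rw [← sub_nonneg]
      have heq : T + ε - (w n + c * (T - w n) / ((n : ℝ) + 1))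
          = ((T + ε - w n) * (((n : ℝ) + 1) - c) + c * ε) / ((n : ℝ) + 1) := by
        field_simp
        ring
      rw [heq]
      apply div_nonneg _ hpos.le
      nlinarith
    linarith

set_option maxHeartbeats 2000000 in
lemma ex_bound (e α β : ℕ → ℝ) (d : ℝ) (hdlb : -1 ≤ d) (hdub : d ≤ 1)
    (hα : ∀ n, α n ∈ Set.Icc (0:ℝ) 1) (hβ : ∀ n, β n ∈ Set.Icc (0:ℝ) 1)
    (he : ∀ n, 1 ≤ n → |e n| ≤ 1)
    (hrec : ∀ n : ℕ, 1 ≤ n → e (n+1) =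
      α (n+1) * d / (n : ℝ) * (∑ k ∈ Finset.Icc 1 n, e k) + (1 - α (n+1)) * (2 * β (n+1) - 1))
    (hcond : (d < 1 ∧ 0 < liminf α atTop) ∨
      (limsup α atTop < 1 ∧ 0 < liminf β atTop ∧ limsup β atTop < 1)) :
    ∃ c : ℝ, c < 1 ∧ ∀ᶠ n in atTop, |e n| ≤ c := by
  classical
  set b : ℕ → ℝ := fun n => ∑ k ∈ Finset.Icc 1 n, e k with hbdef
  set w : ℕ → ℝ := fun n => |b n| / (n : ℝ) with hwdef
  have hw0 : ∀ n, 0 ≤ w n := fun n => div_nonneg (abs_nonneg _) (Nat.cast_nonneg n)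
  have hw1 : ∀ n, 1 ≤ n → w n ≤ 1 := by
    intro n hn
    have hnpos : (0:ℝ) < n := by exact_mod_cast hn
    have hb : |b n| ≤ (n : ℝ) := by
      calc |b n| ≤ ∑ k ∈ Finset.Icc 1 n, |e k| := Finset.abs_sum_le_sum_abs _ _
        _ ≤ ∑ k ∈ Finset.Icc 1 n, 1 := Finset.sum_le_sum (fun k hk => he k (Finset.mem_Icc.mp hk).1)
        _ = (n : ℝ) := by simp [Nat.card_Icc]
    rw [hwdef]
    exact div_le_one_of_le₀ hb hnpos.le
  -- basic facts
  have hαd : ∀ n, -1 ≤ α n * d := by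
    intro n
    obtain ⟨h1, h2⟩ := hα n
    nlinarith
  have hαd1 : ∀ n, α n * d ≤ 1 := by
    intro n
    obtain ⟨h1, h2⟩ := hα n
    nlinarith
  have habsβ : ∀ n, |2 * β n - 1| ≤ 1 := by
    intro n
    obtain ⟨h1, h2⟩ := hβ n
    rw [abs_le]; constructor <;> linarith
  -- multiplied recursion for |b|
  have hwrec : ∀ n : ℕ, 1 ≤ n → |b (n+1)| * (n : ℝ) ≤
      |b n| * ((n : ℝ) + α (n+1) * d) + (1 - α (n+1)) * |2 * β (n+1) - 1| * (n : ℝ) := by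
    intro n hn
    have hnpos : (0:ℝ) < n := by exact_mod_cast hn
    have hbe : b (n+1) = b n + e (n+1) := by
      rw [hbdef]
      exact Finset.sum_Icc_succ_top (by omega) e
    have hmul : b (n+1) * (n : ℝ) = b n * ((n : ℝ) + α (n+1) * d) + (1 - α (n+1)) * (2 * β (n+1) - 1) * (n : ℝ) := by
      rw [hbe, hrec n hn]
      field_simp
      ring
    have h1 : |b (n+1)| * (n : ℝ) = |b (n+1) * (n : ℝ)| := by
      rw [abs_mul, Nat.abs_cast]
    rw [h1, hmul]
    have hn1 : (1:ℝ) ≤ (n : ℝ) := by exact_mod_cast hn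
    have ha2 : (0:ℝ) ≤ (n : ℝ) + α (n+1) * d := by
      have := hαd (n+1); linarith
    calc |b n * ((n : ℝ) + α (n+1) * d) + (1 - α (n+1)) * (2 * β (n+1) - 1) * (n : ℝ)|
        ≤ |b n * ((n : ℝ) + α (n+1) * d)| + |(1 - α (n+1)) * (2 * β (n+1) - 1) * (n : ℝ)| := abs_add_le _ _
      _ = |b n| * ((n : ℝ) + α (n+1) * d) + (1 - α (n+1)) * |2 * β (n+1) - 1| * (n : ℝ) := by
          rw [abs_mul, abs_of_nonneg ha2, abs_mul, abs_mul, Nat.abs_cast,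
            abs_of_nonneg (by linarith [(hα (n+1)).2] : (0:ℝ) ≤ 1 - α (n+1))]
  -- bound on |e (n+1)| given bound on w n
  have hebound : ∀ n : ℕ, 1 ≤ n →
      |e (n+1)| ≤ α (n+1) * |d| * w n + (1 - α (n+1)) * |2 * β (n+1) - 1| := by
    intro n hn
    have hnpos : (0:ℝ) < n := by exact_mod_cast hn
    rw [hrec n hn]
    refine (abs_add_le _ _).trans ?_
    have e1 : |α (n+1) * d / (n:ℝ) * b n| = α (n+1) * |d| * w n := by
      rw [abs_mul, abs_div, abs_mul, abs_of_nonneg (hα (n+1)).1, Nat.abs_cast, hwdef]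
      ring
    have e2 : |(1 - α (n+1)) * (2 * β (n+1) - 1)| = (1 - α (n+1)) * |2 * β (n+1) - 1| := by
      rw [abs_mul, abs_of_nonneg (by linarith [(hα (n+1)).2] : (0:ℝ) ≤ 1 - α (n+1))]
    rw [e1, e2]
  -- generic form of drift step
  have hstep_form : ∀ n : ℕ, 1 ≤ n → ∀ c T : ℝ, 0 ≤ c →
      (|b (n+1)| * (n : ℝ) ≤ |b n| * ((n:ℝ)+1) + c * (T * (n : ℝ) - |b n|)) →
      w (n+1) ≤ w n + c * (T - w n) / ((n:ℝ)+1) := by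
    intro n hn c T hc hineq
    have hnpos : (0:ℝ) < n := by exact_mod_cast hn
    have hpos1 : (0:ℝ) < (n:ℝ)+1 := by positivity
    rw [← sub_nonneg]
    have heq : w n + c * (T - w n) / ((n:ℝ)+1) - w (n+1)
        = ((|b n| * ((n:ℝ)+1) + c * (T * (n : ℝ) - |b n|)) - |b (n+1)| * (n : ℝ))
          / ((n:ℝ) * ((n:ℝ)+1)) := by
      simp only [hwdef]
      push_cast
      field_simp
    rw [heq]
    exact div_nonneg (by linarith) (by positivity)
  have hbddα_le : IsBoundedUnder (· ≤ ·) atTop α := isBoundedUnder_of ⟨1, fun n => (hα n).2⟩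
  have hbddα_ge : IsBoundedUnder (· ≥ ·) atTop α := isBoundedUnder_of ⟨0, fun n => (hα n).1⟩
  have hbddβ_le : IsBoundedUnder (· ≤ ·) atTop β := isBoundedUnder_of ⟨1, fun n => (hβ n).2⟩
  have hbddβ_ge : IsBoundedUnder (· ≥ ·) atTop β := isBoundedUnder_of ⟨0, fun n => (hβ n).1⟩
  rcases hcond with ⟨hd1, ha⟩ | ⟨hA, hlb, hB⟩
  · -- Case L : d < 1 and liminf α > 0
    set a₀ : ℝ := min (liminf α atTop / 2) 2⁻¹ with ha₀def
    have ha₀pos : 0 < a₀ := lt_min (by linarith) (by norm_num)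
    have ha₀half : a₀ ≤ 1/2 := (min_le_right _ _).trans (by norm_num)
    have hevα : ∀ᶠ n in atTop, a₀ < α n := by
      apply eventually_lt_of_lt_liminf _ hbddα_ge
      calc a₀ ≤ liminf α atTop / 2 := min_le_left _ _
        _ < liminf α atTop := by linarith
    set d₁ : ℝ := max d (a₀ * d) with hd₁def
    have hd₁lb : -1 ≤ d₁ := le_trans hdlb (le_max_left _ _)
    have hd₁ub : d₁ < 1 := by
      apply max_lt hd1
      nlinarith
    set r : ℝ := 1 - d₁ with hrdef
    have hrpos : 0 < r := by simp only [hrdef]; linarith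
    set T₁ : ℝ := (1 - a₀) / r with hT₁def
    have hT₁0 : 0 ≤ T₁ := div_nonneg (by linarith) hrpos.le
    have hrT₁ : r * T₁ = 1 - a₀ := by
      rw [hT₁def, mul_div_cancel₀ _ (ne_of_gt hrpos)]
    have hαd₁ : ∀ n, a₀ < α n → α n * d ≤ d₁ := by
      intro n hn
      rcases le_or_gt 0 d with h | h
      · refine le_trans ?_ (le_max_left _ _)
        nlinarith [(hα n).2]
      · refine le_trans ?_ (le_max_right _ _)
        exact mul_le_mul_of_nonpos_right hn.le h.le
    -- drift
    rw [eventually_atTop] at hevα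
    obtain ⟨N₁, hN₁⟩ := hevα
    set K : ℝ := |d| * min T₁ 1 with hKdef
    have hminT : 0 ≤ min T₁ 1 := le_min hT₁0 zero_le_one
    have hK0 : 0 ≤ K := mul_nonneg (abs_nonneg _) hminT
    have hK : K < 1 := by
      rcases eq_or_lt_of_le hdlb with h | h
      · have hdeq : d = -1 := h.symm
        have habs : |d| = 1 := by rw [hdeq]; norm_num
        have hd₁eq : d₁ = -a₀ := by
          rw [hd₁def, hdeq, show a₀ * (-1:ℝ) = -a₀ by ring]
          exact max_eq_right (by linarith)
        have hT₁lt : T₁ < 1 := by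
          rw [hT₁def, div_lt_one (by rw [hrdef, hd₁eq]; linarith)]
          rw [hrdef, hd₁eq]; linarith
        calc K = min T₁ 1 := by rw [hKdef, habs, one_mul]
          _ ≤ T₁ := min_le_left _ _
          _ < 1 := hT₁lt
      · have habs : |d| < 1 := abs_lt.mpr ⟨h, hd1⟩
        calc K ≤ |d| * 1 := mul_le_mul_of_nonneg_left (min_le_right _ _) (abs_nonneg d)
          _ < 1 := by rw [mul_one]; exact habs
    set ε : ℝ := (1 - K) / 4 with hεdef
    have hε0 : 0 < ε := by simp only [hεdef]; linarith
    set K' : ℝ := (1 + K) / 2 with hK'def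
    have hK'1 : K' < 1 := by simp only [hK'def]; linarith
    have hK'0 : 0 ≤ K' := by simp only [hK'def]; linarith
    have hdrift := drift_lemma w T₁ r hrpos (N₁ + 1) ?_ ε hε0
    swap
    · intro n hn
      have hn1 : 1 ≤ n := by omega
      have hn1' : (1:ℝ) ≤ (n:ℝ) := by exact_mod_cast hn1
      have hα' := hN₁ (n+1) (by omega)
      refine ⟨r, le_refl r, by simp only [hrdef]; linarith, ?_⟩
      apply hstep_form n hn1 r T₁ hrpos.le
      have h2 := hwrec n hn1
      have hC : 0 ≤ |b n| * (d₁ - α (n+1) * d) :=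
        mul_nonneg (abs_nonneg _) (sub_nonneg.mpr (hαd₁ (n+1) hα'))
      have hD : 0 ≤ (n:ℝ) * ((1 - a₀) - (1 - α (n+1)) * |2*β (n+1) - 1|) := by
        apply mul_nonneg (Nat.cast_nonneg n)
        nlinarith [habsβ (n+1), (hα (n+1)).2, abs_nonneg (2*β (n+1) - 1)]
      have hrT₁n : r * T₁ * (n:ℝ) = (1 - a₀) * (n:ℝ) := by
        rw [hrT₁]
      have hrX : r * |b n| = |b n| - d₁ * |b n| := by rw [hrdef]; ring
      have hgE : |b n| * ((n:ℝ)+1) + r * (T₁ * (n:ℝ) - |b n|)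
          = |b n| * ((n:ℝ) + α (n+1) * d) + (1 - α (n+1)) * |2*β (n+1) - 1| * (n:ℝ)
            + (|b n| * (d₁ - α (n+1) * d)
              + (n:ℝ) * ((1 - a₀) - (1 - α (n+1)) * |2*β (n+1) - 1|)) := by
        have : r * (T₁ * (n:ℝ) - |b n|) = r * T₁ * (n:ℝ) - r * |b n| := by ring
        rw [this, hrT₁n, hrX]
        ring
      rw [hgE]
      linarith [h2, hC, hD]
    -- conclude
    rw [eventually_atTop] at hdrift
    obtain ⟨N₃, hN₃⟩ := hdrift
    refine ⟨1 - a₀ * (1 - K'),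
      by nlinarith [mul_pos ha₀pos (show (0:ℝ) < 1 - K' by linarith)], ?_⟩
    rw [eventually_atTop]
    refine ⟨N₁ + N₃ + 2, fun k hk => ?_⟩
    obtain ⟨n, rfl⟩ : ∃ n, k = n + 1 := ⟨k - 1, by omega⟩
    have hn1 : 1 ≤ n := by omega
    have h5 := hebound n hn1
    have hα' := hN₁ (n+1) (by omega)
    have hwn := hN₃ n (by omega)
    have hwmin : w n ≤ min T₁ 1 + ε := by
      rcases le_total T₁ 1 with h | h
      · rw [min_eq_left h]; exact hwn
      · rw [min_eq_right h]
        have := hw1 n hn1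
        linarith
    have h6 : |d| * w n ≤ K' := by
      have habs1 : |d| ≤ 1 := abs_le.mpr ⟨hdlb, hdub⟩
      have h7 : |d| * w n ≤ |d| * (min T₁ 1 + ε) :=
        mul_le_mul_of_nonneg_left hwmin (abs_nonneg d)
      have h8 : |d| * (min T₁ 1 + ε) ≤ K + ε := by
        rw [mul_add, hKdef]
        have : |d| * ε ≤ 1 * ε := mul_le_mul_of_nonneg_right habs1 hε0.le
        linarith
      have h9' : K + ε ≤ K' := by rw [hεdef, hK'def]; linarith
      linarith [h7, h8]
    have h9 : α (n+1) * |d| * w n ≤ α (n+1) * K' := by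
      rw [mul_assoc]
      exact mul_le_mul_of_nonneg_left h6 (hα (n+1)).1
    have h10 : (1 - α (n+1)) * |2 * β (n+1) - 1| ≤ 1 - α (n+1) :=
      mul_le_of_le_one_right (by linarith [(hα (n+1)).2]) (habsβ (n+1))
    have hlast : 0 ≤ (α (n+1) - a₀) * (1 - K') :=
      mul_nonneg (by linarith) (by linarith)
    nlinarith [h5, h9, h10, hlast]
  · -- Case R : limsup α < 1, liminf β > 0, limsup β < 1
    set A' : ℝ := (1 + limsup α atTop) / 2 with hA'def
    have hA'1 : A' < 1 := by simp only [hA'def]; linarith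
    have hevα : ∀ᶠ n in atTop, α n < A' := by
      apply eventually_lt_of_limsup_lt _ hbddα_le
      simp only [hA'def]; linarith
    set B' : ℝ := (1 + limsup β atTop) / 2 with hB'def
    have hB'1 : B' < 1 := by simp only [hB'def]; linarith
    have hevβu : ∀ᶠ n in atTop, β n < B' := by
      apply eventually_lt_of_limsup_lt _ hbddβ_le
      simp only [hB'def]; linarith
    set lo : ℝ := liminf β atTop / 2 with hlodef
    have hlopos : 0 < lo := by simp only [hlodef]; linarith
    have hloh : lo ≤ 1 / 2 := by
      have : liminf β atTop ≤ 1 := by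
        apply liminf_le_of_le hbddβ_ge
        intro c hc
        obtain ⟨n, h1, h2⟩ := (hc.and (Filter.Eventually.of_forall fun n => (hβ n).2)).exists
        linarith
      simp only [hlodef]; linarith
    have hevβl : ∀ᶠ n in atTop, lo < β n := by
      apply eventually_lt_of_lt_liminf _ hbddβ_ge
      simp only [hlodef]; linarith
    set T : ℝ := max (2 * B' - 1) (1 - 2 * lo) with hTdef
    have hT1 : T < 1 := max_lt (by linarith) (by linarith)
    have hβT : ∀ᶠ n in atTop, |2 * β n - 1| ≤ T := by
      filter_upwards [hevβu, hevβl] with n h1 h2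
      rw [abs_le]
      constructor
      · have h3 : -(1 - 2 * lo) ≤ 2 * β n - 1 := by linarith
        have h4 : -T ≤ -(1 - 2 * lo) := neg_le_neg (le_max_right _ _)
        linarith
      · exact le_trans (by linarith) (le_max_left _ _)
    rw [eventually_atTop] at hevα hβT
    obtain ⟨N₁, hN₁⟩ := hevα
    obtain ⟨N₂, hN₂⟩ := hβT
    set ε : ℝ := (1 - T) / 4 with hεdef
    have hε0 : 0 < ε := by simp only [hεdef]; linarith
    have hdrift := drift_lemma w T (1 - A') (by linarith) (N₁ + N₂ + 1) ?_ ε hε0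
    swap
    · intro n hn
      have hn1 : 1 ≤ n := by omega
      have hn1' : (1:ℝ) ≤ (n:ℝ) := by exact_mod_cast hn1
      have hα' := hN₁ (n+1) (by omega)
      have hβ' := hN₂ (n+1) (by omega)
      refine ⟨1 - α (n+1), by linarith, by linarith [(hα (n+1)).1], ?_⟩
      apply hstep_form n hn1 _ T (by linarith [(hα (n+1)).2])
      have h2 := hwrec n hn1
      have hA0 : 0 ≤ (1 - α (n+1)) * ((n:ℝ) * (T - |2 * β (n+1) - 1|)) :=
        mul_nonneg (by linarith [(hα (n+1)).2]) (mul_nonneg (Nat.cast_nonneg n) (by linarith))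
      have hB0 : 0 ≤ |b n| * (α (n+1) * (1 - d)) :=
        mul_nonneg (abs_nonneg _) (mul_nonneg (hα (n+1)).1 (by linarith))
      nlinarith [h2, hA0, hB0]
    rw [eventually_atTop] at hdrift
    obtain ⟨N₃, hN₃⟩ := hdrift
    refine ⟨T + ε, by simp only [hεdef]; linarith, ?_⟩
    rw [eventually_atTop]
    refine ⟨N₁ + N₂ + N₃ + 2, fun k hk => ?_⟩
    obtain ⟨n, rfl⟩ : ∃ n, k = n + 1 := ⟨k - 1, by omega⟩
    have hn1 : 1 ≤ n := by omega
    have h5 := hebound n hn1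
    have hα' := hN₁ (n+1) (by omega)
    have hβ' := hN₂ (n+1) (by omega)
    have hwn := hN₃ n (by omega)
    have hT0 : 0 ≤ T := le_trans (abs_nonneg _) (hN₂ (n+1) (by omega))
    have habs1 : |d| ≤ 1 := abs_le.mpr ⟨hdlb, hdub⟩
    have h6a : |d| * w n ≤ w n := by
      have := mul_nonneg (sub_nonneg.mpr habs1) (hw0 n)
      nlinarith
    have h6 : α (n+1) * |d| * w n ≤ α (n+1) * (T + ε) := by
      rw [mul_assoc]
      exact mul_le_mul_of_nonneg_left (h6a.trans hwn) (hα (n+1)).1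
    have h7 : (1 - α (n+1)) * |2 * β (n+1) - 1| ≤ (1 - α (n+1)) * T :=
      mul_le_mul_of_nonneg_left hβ' (by linarith [(hα (n+1)).2])
    have hαε : 0 ≤ (1 - α (n+1)) * ε := mul_nonneg (by linarith [(hα (n+1)).2]) hε0.le
    nlinarith [h5, h6, h7, hαε]

variable {Ω : Type*} {m0 : MeasurableSpace Ω} (μ : Measure Ω) [IsProbabilityMeasure μ]
  (p q : ℝ) (α β : ℕ → ℝ) (S : ℕ → Ω → ℝ)


theorem derw_liminf_var_pos (h : IsDERW μ p q α β S)
    (hcond :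
      (p < 1 ∧ 0 < liminf α atTop) ∨
      (p = 1 ∧ 0 < liminf α atTop ∧ limsup α atTop < 1 ∧
        0 < liminf β atTop ∧
        limsup β atTop < (1 - limsup α atTop) / (1 - liminf α atTop)) ∨
      (liminf α atTop = 0 ∧ limsup α atTop < 1 ∧
        0 < liminf β atTop ∧
        limsup β atTop < 1 - p * limsup α atTop)) :
    0 < liminf (fun n => variance (derwX S n) μ) atTop := by
  classical
  set e : ℕ → ℝ := fun n => ∫ ω, derwX S n ω ∂μ with hedef
  have hXint : ∀ n, Integrable (derwX S n) μ := by
    intro n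
    rcases Nat.eq_zero_or_pos n with rfl | hn
    · have h0 : derwX S 0 = fun _ => (0:ℝ) := by
        funext ω; simp [derwX]
      rw [h0]; exact integrable_const 0
    · refine ⟨(h.hmeas n).aestronglyMeasurable, HasFiniteIntegral.of_bounded (C := 1) ?_⟩
      filter_upwards with ω
      rcases h.hpm n hn ω with h' | h' <;> simp [h']
  have hSeq : ∀ n, S n = fun ω => ∑ k ∈ Finset.Icc 1 n, derwX S k ω := by
    intro n
    induction n with
    | zero => funext ω; simp [h.hS0 ω]
    | succ n ih =>
      funext ω
      rw [Finset.sum_Icc_succ_top (by omega : 1 ≤ n + 1)]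
      have hx : derwX S (n+1) ω = S (n+1) ω - S n ω := by simp [derwX]
      rw [show (∑ k ∈ Finset.Icc 1 n, derwX S k ω) = S n ω from (congrFun ih ω).symm, hx]
      ring
  have hSint : ∀ n, Integrable (S n) μ := by
    intro n
    rw [hSeq n]
    exact integrable_finset_sum _ (fun k _ => hXint k)
  have hbS : ∀ n, ∫ ω, S n ω ∂μ = ∑ k ∈ Finset.Icc 1 n, e k := by
    intro n
    rw [hSeq n, integral_finset_sum _ (fun k _ => hXint k)]
  have he1 : ∀ n, 1 ≤ n → |e n| ≤ 1 := by
    intro n hn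
    have h1 : |∫ ω, derwX S n ω ∂μ| ≤ ∫ ω, ‖derwX S n ω‖ ∂μ := by
      rw [← Real.norm_eq_abs]
      exact norm_integral_le_integral_norm _
    have h2 : ∫ ω, ‖derwX S n ω‖ ∂μ ≤ ∫ _, (1:ℝ) ∂μ := by
      apply integral_mono (hXint n).norm (integrable_const 1)
      intro ω
      rcases h.hpm n hn ω with h' | h' <;> simp [h']
    have h3 : ∫ _, (1:ℝ) ∂μ = 1 := by simp
    calc |e n| = |∫ ω, derwX S n ω ∂μ| := by rw [hedef]
      _ ≤ 1 := by rw [h3] at h2; linarith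
  have hrec : ∀ n, 1 ≤ n → e (n+1) = α (n+1) * (2*p-1) / (n:ℝ) *
      (∑ k ∈ Finset.Icc 1 n, e k) + (1 - α (n+1)) * (2 * β (n+1) - 1) := by
    intro n hn
    have hle : derwF S n ≤ m0 := iSup₂_le fun k _ => (h.hmeas k).comap_le
    haveI : SigmaFinite (μ.trim hle) := inferInstance
    calc e (n+1) = ∫ ω, derwX S (n+1) ω ∂μ := by rw [hedef]
      _ = ∫ ω, (μ[derwX S (n+1)|derwF S n]) ω ∂μ := (integral_condExp hle).symm
      _ = ∫ ω, (α (n+1) * (2*p-1) / (n:ℝ) * S n ω + (1 - α (n+1)) * (2 * β (n+1) - 1)) ∂μ :=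
          integral_congr_ae (h.hCE n hn)
      _ = α (n+1) * (2*p-1) / (n:ℝ) * (∑ k ∈ Finset.Icc 1 n, e k)
          + (1 - α (n+1)) * (2 * β (n+1) - 1) := by
          rw [integral_add ((hSint n).const_mul _) (integrable_const _),
            integral_const_mul, hbS n, integral_const]
          simp
  have hvar : ∀ n, 1 ≤ n → variance (derwX S n) μ = 1 - e n ^ 2 := by
    intro n hn
    have hmem : MemLp (derwX S n) 2 μ :=
      MemLp.of_bound (h.hmeas n).aestronglyMeasurable 1
        (Filter.Eventually.of_forall fun ω => by
          rcases h.hpm n hn ω with h' | h' <;> simp [h'])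
    rw [variance_eq_sub hmem]
    have hsq : ∫ ω, (derwX S n ^ 2) ω ∂μ = 1 := by
      have hfun : (derwX S n ^ 2 : Ω → ℝ) = fun _ => 1 := by
        funext ω
        rcases h.hpm n hn ω with h' | h' <;> simp [Pi.pow_apply, h']
      rw [hfun]; simp
    rw [hsq]
  have hbdd_le : IsBoundedUnder (· ≤ ·) atTop α := isBoundedUnder_of ⟨1, fun n => (h.hα n).2⟩
  have hbdd_ge : IsBoundedUnder (· ≥ ·) atTop α := isBoundedUnder_of ⟨0, fun n => (h.hα n).1⟩
  have hal : liminf α atTop ≤ limsup α atTop := liminf_le_limsup hbdd_le hbdd_ge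
  have hcond' : ((2*p-1) < 1 ∧ 0 < liminf α atTop) ∨
      (limsup α atTop < 1 ∧ 0 < liminf β atTop ∧ limsup β atTop < 1) := by
    rcases hcond with ⟨h1, h2⟩ | ⟨hp1, h2, h3, h4, h5⟩ | ⟨h1, h2, h3, h4⟩
    · left; exact ⟨by linarith, h2⟩
    · right
      refine ⟨h3, h4, ?_⟩
      have hden : 0 < 1 - liminf α atTop := by linarith
      have hle1 : (1 - limsup α atTop) / (1 - liminf α atTop) ≤ 1 := by
        rw [div_le_one hden]; linarith
      linarith
    · right
      refine ⟨h2, h3, ?_⟩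
      have h0 : 0 ≤ limsup α atTop := h1 ▸ hal
      have : 0 ≤ p * limsup α atTop := mul_nonneg h.hp.1 h0
      linarith
  obtain ⟨c, hc1, hev⟩ := ex_bound e α β (2*p-1)
    (by linarith [h.hp.1]) (by linarith [h.hp.2]) h.hα h.hβ he1 hrec hcond'
  have hc0 : 0 ≤ c := by
    obtain ⟨n, hn⟩ := hev.exists
    exact le_trans (abs_nonneg _) hn
  have hlow : ∀ᶠ n in atTop, 1 - c^2 ≤ variance (derwX S n) μ := by
    filter_upwards [hev, eventually_ge_atTop 1] with n h1 h2
    rw [hvar n h2]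
    have h3 := abs_le.mp h1
    nlinarith [h3.1, h3.2]
  have hbddv : IsBoundedUnder (· ≤ ·) atTop (fun n => variance (derwX S n) μ) := by
    refine ⟨1, ?_⟩
    rw [eventually_map]
    filter_upwards [eventually_ge_atTop 1] with n hn
    rw [hvar n hn]
    nlinarith [sq_nonneg (e n)]
  have hfin := le_liminf_of_le hbddv.isCoboundedUnder_ge hlow
  calc (0:ℝ) < 1 - c^2 := by nlinarith
    _ ≤ _ := hfin
end
end

section
/- Suppose either (I) 3/4 < p < 1 and ℓ_inf(α) > 1/(4p−2), or (II) p = 1, 1/(4p−2) < ℓ_inf(α) ≤ ℓ_sup(α) < 1 and 0 < ℓ_inf(β) ≤ ℓ_sup(β) < (1−ℓ_sup(α))/(1−ℓ_inf(α)). Then Σ_{n=1}^∞ 1/(s_n⁴ a_n⁴) < ∞. -/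
open MeasureTheory ProbabilityTheory Filter

noncomputable section

variable {Ω : Type*} {m0 : MeasurableSpace Ω} (μ : Measure Ω) [IsProbabilityMeasure μ]
  (p q : ℝ) (α β : ℕ → ℝ) (S : ℕ → Ω → ℝ)

section Aux

variable {Ω : Type*} {m0 : MeasurableSpace Ω} {μ : Measure Ω} [IsProbabilityMeasure μ]
  {p q : ℝ} {α β : ℕ → ℝ} {S : ℕ → Ω → ℝ}

lemma derwS_eq_sum (hS0 : ∀ ω, S 0 ω = 0) (n : ℕ) (ω : Ω) :
    S n ω = ∑ j ∈ Finset.Icc 1 n, derwX S j ω := by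
  induction n with
  | zero => simp [hS0]
  | succ n ih =>
    rw [Finset.sum_Icc_succ_top (Nat.one_le_iff_ne_zero.2 (Nat.succ_ne_zero n)), ← ih]
    simp [derwX]

lemma derwS_meas (h : IsDERW μ p q α β S) (n : ℕ) : Measurable (S n) := by
  have : S n = fun ω => ∑ j ∈ Finset.Icc 1 n, derwX S j ω := by
    funext ω; exact derwS_eq_sum h.hS0 n ω
  rw [this]
  exact Finset.measurable_sum _ fun j _ => h.hmeas j

lemma derwS_abs_le (h : IsDERW μ p q α β S) (n : ℕ) (ω : Ω) : |S n ω| ≤ (n : ℝ) := by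
  rw [derwS_eq_sum h.hS0 n ω]
  calc |∑ j ∈ Finset.Icc 1 n, derwX S j ω| ≤ ∑ j ∈ Finset.Icc 1 n, |derwX S j ω| :=
        Finset.abs_sum_le_sum_abs _ _
    _ ≤ ∑ _j ∈ Finset.Icc 1 n, (1 : ℝ) := by
        refine Finset.sum_le_sum fun j hj => ?_
        rcases h.hpm j (Finset.mem_Icc.1 hj).1 ω with h1 | h1 <;> rw [h1] <;> norm_num
    _ ≤ (n : ℝ) := by simp

lemma derwS_int (h : IsDERW μ p q α β S) (n : ℕ) : Integrable (S n) μ := by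
  refine Integrable.mono' (integrable_const (n : ℝ)) ((derwS_meas h n).aestronglyMeasurable) ?_
  exact Filter.Eventually.of_forall fun ω => by simpa using derwS_abs_le h n ω

lemma derwX_abs_le (h : IsDERW μ p q α β S) (n : ℕ) (hn : 1 ≤ n) (ω : Ω) :
    |derwX S n ω| ≤ 1 := by
  rcases h.hpm n hn ω with h1 | h1 <;> rw [h1] <;> norm_num

lemma derwX_int (h : IsDERW μ p q α β S) (n : ℕ) : Integrable (derwX S n) μ := by
  refine Integrable.mono' (integrable_const (2 * (n:ℝ))) ((h.hmeas n).aestronglyMeasurable) ?_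
  refine Filter.Eventually.of_forall fun ω => ?_
  have h1 := derwS_abs_le h n ω
  have h2 := derwS_abs_le h (n - 1) ω
  have : |derwX S n ω| ≤ (n : ℝ) + ((n-1 : ℕ) : ℝ) := by
    calc |derwX S n ω| ≤ |S n ω| + |S (n-1) ω| := abs_sub _ _
      _ ≤ _ := add_le_add h1 h2
  refine this.trans ?_
  have : ((n - 1 : ℕ) : ℝ) ≤ (n : ℝ) := by exact_mod_cast Nat.cast_le.2 (Nat.sub_le n 1)
  linarith

end Aux
set_option linter.unusedSectionVars false

section AuxA

variable {p : ℝ} {α : ℕ → ℝ}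

lemma derwa_succ (p : ℝ) (α : ℕ → ℝ) (n : ℕ) :
    derwa p α (n + 1) = derwa p α n * (1 + (2 * p - 1) * α (n + 1) / (n : ℝ)) := by
  cases n with
  | zero => simp [derwa]
  | succ m =>
    unfold derwa
    rw [Finset.prod_Ico_succ_top (a := 1) (b := m + 1) (Nat.le_add_left 1 m)]

lemma derwa_one_le (hp : 0 ≤ 2 * p - 1) (hα : ∀ n, α n ∈ Set.Icc (0:ℝ) 1) (n : ℕ) :
    1 ≤ derwa p α n := by
  unfold derwa
  have := Finset.prod_le_prod (s := Finset.Ico 1 n) (f := fun _ => (1:ℝ))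
    (g := fun k => 1 + (2 * p - 1) * α (k + 1) / (k : ℝ))
    (fun i _ => by norm_num)
    (fun k _ => by
      have h1 : 0 ≤ (2 * p - 1) * α (k + 1) / (k : ℝ) :=
        div_nonneg (mul_nonneg hp (hα (k+1)).1) (Nat.cast_nonneg k)
      linarith)
  simpa using this

lemma derwa_pos (hp : 0 ≤ 2 * p - 1) (hα : ∀ n, α n ∈ Set.Icc (0:ℝ) 1) (n : ℕ) :
    0 < derwa p α n := lt_of_lt_of_le one_pos (derwa_one_le hp hα n)

/-- doubling-type bound : for `1 ≤ n`, `a (n+k) ≤ a n * (n+k)/n`. -/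
lemma derwa_le_mul (hp : 2 * p - 1 ≤ 1) (hp0 : 0 ≤ 2 * p - 1)
    (hα : ∀ n, α n ∈ Set.Icc (0:ℝ) 1) {n : ℕ} (hn : 1 ≤ n) (k : ℕ) :
    derwa p α (n + k) ≤ derwa p α n * ((n + k : ℕ) : ℝ) / (n : ℝ) := by
  have hn' : (0:ℝ) < (n:ℝ) := by exact_mod_cast hn
  induction k with
  | zero => simp [le_div_iff₀ hn', mul_comm]
  | succ k ih =>
    have hnk : (0:ℝ) < ((n + k : ℕ) : ℝ) := by positivity
    have ht : (2 * p - 1) * α (n + k + 1) ≤ 1 :=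
      mul_le_one₀ hp (hα _).1 (hα _).2
    have ht0 : 0 ≤ (2 * p - 1) * α (n + k + 1) / ((n + k : ℕ) : ℝ) :=
      div_nonneg (mul_nonneg hp0 (hα _).1) hnk.le
    have hfac : (1 + (2 * p - 1) * α (n + k + 1) / ((n + k : ℕ) : ℝ))
        ≤ ((n + k + 1 : ℕ) : ℝ) / ((n + k : ℕ) : ℝ) := by
      rw [le_div_iff₀ hnk]
      have heq : (1 + (2 * p - 1) * α (n + k + 1) / ((n + k : ℕ) : ℝ)) * ((n + k : ℕ) : ℝ)
          = ((n + k : ℕ) : ℝ) + (2 * p - 1) * α (n + k + 1) := by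
        field_simp
      rw [heq]; push_cast; linarith
    have h1 : derwa p α (n + (k + 1)) = derwa p α (n + k)
        * (1 + (2 * p - 1) * α (n + k + 1) / ((n + k : ℕ) : ℝ)) := by
      rw [show n + (k + 1) = (n + k) + 1 by ring, derwa_succ]
    rw [h1]
    have hpos : 0 ≤ derwa p α n * ((n + k : ℕ) : ℝ) / (n : ℝ) := by
      have := derwa_pos hp0 hα n
      positivity
    calc derwa p α (n + k) * (1 + (2 * p - 1) * α (n + k + 1) / ((n + k : ℕ) : ℝ))
        ≤ (derwa p α n * ((n + k : ℕ) : ℝ) / (n : ℝ))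
          * (1 + (2 * p - 1) * α (n + k + 1) / ((n + k : ℕ) : ℝ)) := by
          exact mul_le_mul_of_nonneg_right ih (by linarith)
      _ ≤ (derwa p α n * ((n + k : ℕ) : ℝ) / (n : ℝ))
          * (((n + k + 1 : ℕ) : ℝ) / ((n + k : ℕ) : ℝ)) :=
          mul_le_mul_of_nonneg_left hfac hpos
      _ = derwa p α n * ((n + (k + 1) : ℕ) : ℝ) / (n : ℝ) := by
          push_cast
          field_simp
          ring

end AuxA
section AuxGrowth

open Real in
/-- growth lower bound: `a k ≥ a N * k^r / N^r` for `k ≥ N`. -/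
lemma derwa_ge_rpow {p : ℝ} {α : ℕ → ℝ} (hp0 : 0 ≤ 2 * p - 1)
    (hα : ∀ n, α n ∈ Set.Icc (0:ℝ) 1) {r : ℝ} (hr0 : 0 ≤ r) (hr1 : r ≤ 1)
    {N : ℕ} (hN : 1 ≤ N) (hev : ∀ k, N ≤ k → r ≤ (2 * p - 1) * α (k + 1)) :
    ∀ k, N ≤ k → derwa p α N * ((k : ℝ) ^ r / (N : ℝ) ^ r) ≤ derwa p α k := by
  intro k hk
  induction k, hk using Nat.le_induction with
  | base =>
    have : (0:ℝ) < (N:ℝ) ^ r := rpow_pos_of_pos (by exact_mod_cast hN) r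
    rw [div_self (ne_of_gt this), mul_one]
  | succ k hk ih =>
    have hk1 : 1 ≤ k := le_trans hN hk
    have hkpos : (0:ℝ) < (k:ℝ) := by exact_mod_cast hk1
    have hNpos : (0:ℝ) < (N:ℝ) ^ r := rpow_pos_of_pos (by exact_mod_cast hN) r
    have hapos : 0 < derwa p α k := derwa_pos hp0 hα k
    have hbern : ((k:ℝ) + 1) ^ r / (k:ℝ) ^ r ≤ 1 + r / (k:ℝ) := by
      rw [← Real.div_rpow (by positivity) hkpos.le]
      have h1 : ((k:ℝ) + 1) / (k:ℝ) = 1 + 1 / (k:ℝ) := by field_simp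
      rw [h1]
      have := rpow_one_add_le_one_add_mul_self (s := 1 / (k:ℝ)) (le_trans (by norm_num : (-1:ℝ) ≤ 0) (by positivity)) hr0 hr1
      calc (1 + 1 / (k:ℝ)) ^ r ≤ 1 + r * (1 / (k:ℝ)) := this
        _ = 1 + r / (k:ℝ) := by ring
    have hfac : 1 + r / (k:ℝ) ≤ 1 + (2 * p - 1) * α (k + 1) / (k:ℝ) := by
      have := hev k hk
      gcongr
    have hchain : derwa p α N * (((k:ℝ) + 1) ^ r / (N : ℝ) ^ r)
        = (derwa p α N * ((k : ℝ) ^ r / (N : ℝ) ^ r)) * (((k:ℝ) + 1) ^ r / (k:ℝ) ^ r) := by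
      have hkr : (0:ℝ) < (k:ℝ) ^ r := rpow_pos_of_pos hkpos r
      field_simp
    have haN : 0 < derwa p α N * ((k : ℝ) ^ r / (N : ℝ) ^ r) := by
      have := derwa_pos hp0 hα N
      have hkr : (0:ℝ) < (k:ℝ) ^ r := rpow_pos_of_pos hkpos r
      positivity
    calc derwa p α N * (((k+1:ℕ):ℝ) ^ r / (N : ℝ) ^ r)
        = derwa p α N * (((k:ℝ) + 1) ^ r / (N : ℝ) ^ r) := by push_cast; ring_nf
      _ = (derwa p α N * ((k : ℝ) ^ r / (N : ℝ) ^ r)) * (((k:ℝ) + 1) ^ r / (k:ℝ) ^ r) := hchain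
      _ ≤ derwa p α k * (((k:ℝ) + 1) ^ r / (k:ℝ) ^ r) := by
          have hnn : 0 ≤ ((k:ℝ) + 1) ^ r / (k:ℝ) ^ r := by positivity
          exact mul_le_mul_of_nonneg_right ih hnn
      _ ≤ derwa p α k * (1 + (2 * p - 1) * α (k + 1) / (k:ℝ)) := by
          exact mul_le_mul_of_nonneg_left (le_trans hbern hfac) hapos.le
      _ = derwa p α (k + 1) := (derwa_succ p α k).symm

end AuxGrowth
section AuxKey

set_option linter.unusedSectionVars false

variable {Ω : Type*} {m0 : MeasurableSpace Ω} {μ : Measure Ω} [IsProbabilityMeasure μ]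
  {p q : ℝ} {α β : ℕ → ℝ} {S : ℕ → Ω → ℝ}

lemma derwF_le (h : IsDERW μ p q α β S) (k : ℕ) : derwF S k ≤ m0 := by
  refine iSup₂_le fun j _ => ?_
  exact (h.hmeas j).comap_le

lemma derw_EX (h : IsDERW μ p q α β S) {k : ℕ} (hk : 1 ≤ k) :
    ∫ ω', derwX S (k+1) ω' ∂μ
      = α (k+1) * (2*p-1) / (k:ℝ) * (∫ ω', S k ω' ∂μ)
        + (1 - α (k+1)) * (2 * β (k+1) - 1) := by
  have hm : derwF S k ≤ m0 := derwF_le h k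
  calc ∫ ω', derwX S (k+1) ω' ∂μ
      = ∫ ω', (μ[derwX S (k+1)|derwF S k]) ω' ∂μ := (integral_condExp hm).symm
    _ = ∫ ω', (α (k+1) * (2*p-1) / (k:ℝ) * S k ω'
          + (1 - α (k+1)) * (2 * β (k+1) - 1)) ∂μ := integral_congr_ae (h.hCE k hk)
    _ = α (k+1) * (2*p-1) / (k:ℝ) * (∫ ω', S k ω' ∂μ)
          + (1 - α (k+1)) * (2 * β (k+1) - 1) := by
        rw [integral_add (Integrable.const_mul (derwS_int h k) _) (integrable_const _),
          integral_const_mul, integral_const]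
        simp

lemma derw_key (h : IsDERW μ p q α β S) (hp0 : 0 ≤ 2 * p - 1) {k : ℕ} (hk : 1 ≤ k) (ω : Ω) :
    derwa p α (k+1) * derwY μ p α S (k+1) ω
      = derwX S (k+1) ω
        - (α (k+1) * (2*p-1) / (k:ℝ) * S k ω + (1 - α (k+1)) * (2 * β (k+1) - 1)) := by
  have hEX := derw_EX h hk
  have hXS : derwX S (k+1) ω = S (k+1) ω - S k ω := by simp [derwX]
  have hIS : ∫ ω', S (k+1) ω' ∂μ = ∫ ω', S k ω' ∂μ + ∫ ω', derwX S (k+1) ω' ∂μ := by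
    rw [← integral_add (derwS_int h k) (derwX_int h (k+1))]
    refine integral_congr_ae (Filter.Eventually.of_forall fun ω' => ?_)
    simp [derwX]
  have ha := (derwa_pos hp0 h.hα k).ne'
  have hk0 : ((k:ℝ)) ≠ 0 := Nat.cast_ne_zero.2 (by omega)
  have hfacne : (1 + (2 * p - 1) * α (k + 1) / (k:ℝ)) ≠ 0 := by
    have h1 : 0 ≤ (2 * p - 1) * α (k + 1) / (k : ℝ) :=
      div_nonneg (mul_nonneg hp0 (h.hα (k+1)).1) (Nat.cast_nonneg k)
    positivity
  have e1 : derwa p α (k+1) * derwY μ p α S (k+1) ω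
      = (S (k+1) ω - ∫ ω', S (k+1) ω' ∂μ)
        - (1 + (2 * p - 1) * α (k + 1) / (k:ℝ)) * (S k ω - ∫ ω', S k ω' ∂μ) := by
    unfold derwY derwM
    simp only [Nat.add_sub_cancel]
    rw [derwa_succ]
    generalize hA : derwa p α k = A at ha ⊢
    generalize hF : (1 + (2 * p - 1) * α (k + 1) / (k:ℝ)) = F at hfacne ⊢
    field_simp
  rw [e1, hIS, hEX, show S (k+1) ω = S k ω + derwX S (k+1) ω by rw [hXS]; ring]
  ring

end AuxKey
section AuxY

set_option linter.unusedSectionVars false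

variable {Ω : Type*} {m0 : MeasurableSpace Ω} {μ : Measure Ω} [IsProbabilityMeasure μ]
  {p q : ℝ} {α β : ℕ → ℝ} {S : ℕ → Ω → ℝ}

lemma derwY_meas (h : IsDERW μ p q α β S) (j : ℕ) : Measurable (derwY μ p α S j) := by
  unfold derwY derwM
  exact (((derwS_meas h j).sub_const _).div_const _).sub
    (((derwS_meas h (j-1)).sub_const _).div_const _)

lemma derwY_abs_le (h : IsDERW μ p q α β S) (hp0 : 0 ≤ 2 * p - 1) (hp1 : 2 * p - 1 ≤ 1)
    {j : ℕ} (hj : 1 ≤ j) (ω : Ω) : |derwY μ p α S j ω| ≤ 3 / derwa p α j := by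
  have hpos := derwa_pos hp0 h.hα j
  rw [le_div_iff₀ hpos, ← abs_of_pos hpos, ← abs_mul, mul_comm]
  rcases Nat.exists_eq_add_of_le hj with ⟨m, rfl⟩
  rcases Nat.eq_zero_or_pos m with rfl | hm
  · -- j = 1
    have ha1 : derwa p α (1 + 0) = 1 := by simp [derwa]
    have hIS1 : ∫ ω', S 1 ω' ∂μ = ∫ ω', derwX S 1 ω' ∂μ := by
      refine integral_congr_ae (Filter.Eventually.of_forall fun ω' => ?_)
      simp [derwX, h.hS0]
    have hIX : |∫ ω', derwX S 1 ω' ∂μ| ≤ 1 := by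
      calc |∫ ω', derwX S 1 ω' ∂μ| = ‖∫ ω', derwX S 1 ω' ∂μ‖ := (Real.norm_eq_abs _).symm
        _ ≤ ∫ ω', ‖derwX S 1 ω'‖ ∂μ := norm_integral_le_integral_norm _
        _ = ∫ ω', |derwX S 1 ω'| ∂μ := by simp [Real.norm_eq_abs]
        _ ≤ ∫ _ω', (1:ℝ) ∂μ := integral_mono (derwX_int h 1).abs (integrable_const 1)
              (fun ω' => derwX_abs_le h 1 le_rfl ω')
        _ = 1 := by simp
    have hY1 : derwY μ p α S (1 + 0) ω = S 1 ω - ∫ ω', S 1 ω' ∂μ := by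
      unfold derwY derwM
      simp [derwa, h.hS0, integral_const]
    rw [ha1, one_mul, hY1, hIS1]
    have h1 : |S 1 ω| ≤ 1 := by simpa using derwS_abs_le h 1 ω
    calc |S 1 ω - ∫ ω', derwX S 1 ω' ∂μ| ≤ |S 1 ω| + |∫ ω', derwX S 1 ω' ∂μ| := abs_sub _ _
      _ ≤ 3 := by linarith
  · -- j = m + 1 with m ≥ 1
    rw [show (1:ℕ) + m = m + 1 by ring] at *
    rw [derw_key h hp0 hm ω]
    have hS := derwS_abs_le h m ω
    have hm' : (0:ℝ) < (m:ℝ) := by exact_mod_cast hm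
    have hα1 := h.hα (m+1)
    have hβ1 := h.hβ (m+1)
    have hterm : |α (m+1) * (2*p-1) / (m:ℝ) * S m ω| ≤ 1 := by
      rw [abs_mul, abs_div]
      rw [abs_of_nonneg (mul_nonneg hα1.1 hp0), abs_of_pos hm']
      rw [div_mul_eq_mul_div, div_le_one hm']
      have habs : |S m ω| ≤ (m:ℝ) := hS
      calc α (m+1) * (2*p-1) * |S m ω| ≤ 1 * 1 * (m:ℝ) := by
            apply mul_le_mul (by nlinarith [hα1.1, hα1.2] : α (m+1) * (2*p-1) ≤ 1 * 1)
              habs (abs_nonneg _) (by norm_num)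
        _ = (m:ℝ) := by ring
    have hterm2 : |(1 - α (m+1)) * (2 * β (m+1) - 1)| ≤ 1 := by
      rw [abs_mul]
      calc |1 - α (m+1)| * |2 * β (m+1) - 1| ≤ 1 * 1 := by
            apply mul_le_mul ?_ ?_ (abs_nonneg _) (by norm_num)
            · rw [abs_le]; constructor <;> nlinarith [hα1.1, hα1.2]
            · rw [abs_le]; constructor <;> nlinarith [hβ1.1, hβ1.2]
        _ = 1 := by ring
    have hX := derwX_abs_le h (m+1) (by omega) ω
    calc |derwX S (m+1) ω - (α (m+1) * (2*p-1) / (m:ℝ) * S m ω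
            + (1 - α (m+1)) * (2 * β (m+1) - 1))|
        ≤ |derwX S (m+1) ω| + |α (m+1) * (2*p-1) / (m:ℝ) * S m ω
            + (1 - α (m+1)) * (2 * β (m+1) - 1)| := abs_sub _ _
      _ ≤ 1 + (|α (m+1) * (2*p-1) / (m:ℝ) * S m ω|
            + |(1 - α (m+1)) * (2 * β (m+1) - 1)|) := by
          gcongr
          exact abs_add_le _ _
      _ ≤ 3 := by linarith

lemma derwYsq_int (h : IsDERW μ p q α β S) (hp0 : 0 ≤ 2 * p - 1) (hp1 : 2 * p - 1 ≤ 1)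
    (j : ℕ) : Integrable (fun ω => derwY μ p α S j ω ^ 2) μ := by
  rcases Nat.eq_zero_or_pos j with rfl | hj
  · have : derwY μ p α S 0 = fun _ => 0 := by
      funext ω; unfold derwY; simp
    rw [this]; simpa using integrable_const (0:ℝ)
  refine Integrable.mono' (integrable_const ((3 / derwa p α j)^2))
    (((derwY_meas h j).pow_const 2).aestronglyMeasurable) ?_
  refine Filter.Eventually.of_forall fun ω => ?_
  rw [Real.norm_eq_abs, abs_of_nonneg (sq_nonneg _)]
  have := derwY_abs_le h hp0 hp1 hj ω
  calc derwY μ p α S j ω ^ 2 = |derwY μ p α S j ω| ^ 2 := (sq_abs _).symm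
    _ ≤ (3 / derwa p α j) ^ 2 := by
        apply pow_le_pow_left₀ (abs_nonneg _) this

lemma derwYsq_nonneg (j : ℕ) : 0 ≤ ∫ ω, derwY μ p α S j ω ^ 2 ∂μ :=
  integral_nonneg fun ω => sq_nonneg _

lemma derwYsq_le (h : IsDERW μ p q α β S) (hp0 : 0 ≤ 2 * p - 1) (hp1 : 2 * p - 1 ≤ 1)
    {j : ℕ} (hj : 1 ≤ j) : ∫ ω, derwY μ p α S j ω ^ 2 ∂μ ≤ 9 / derwa p α j ^ 2 := by
  have hpos := derwa_pos hp0 h.hα j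
  calc ∫ ω, derwY μ p α S j ω ^ 2 ∂μ ≤ ∫ _ω, (3 / derwa p α j) ^ 2 ∂μ := by
        refine integral_mono (derwYsq_int h hp0 hp1 j) (integrable_const _) fun ω => ?_
        calc derwY μ p α S j ω ^ 2 = |derwY μ p α S j ω| ^ 2 := (sq_abs _).symm
          _ ≤ (3 / derwa p α j) ^ 2 :=
              pow_le_pow_left₀ (abs_nonneg _) (derwY_abs_le h hp0 hp1 hj ω) 2
    _ = 9 / derwa p α j ^ 2 := by
        rw [integral_const]; norm_num [div_pow]

lemma derwYsq_ge (h : IsDERW μ p q α β S) (hp0 : 0 ≤ 2 * p - 1) (hp1 : 2 * p - 1 ≤ 1) {k : ℕ} (hk : 1 ≤ k)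
    {ε : ℝ} (hε : 0 < ε)
    (hb : ∀ ω, |α (k+1) * (2*p-1) / (k:ℝ) * S k ω + (1 - α (k+1)) * (2 * β (k+1) - 1)| ≤ 1 - ε) :
    ε ^ 2 / derwa p α (k+1) ^ 2 ≤ ∫ ω, derwY μ p α S (k+1) ω ^ 2 ∂μ := by
  have hpos := derwa_pos hp0 h.hα (k+1)
  have hkey : ∀ ω, ε / derwa p α (k+1) ≤ |derwY μ p α S (k+1) ω| := by
    intro ω
    have h1 : ε ≤ |derwa p α (k+1) * derwY μ p α S (k+1) ω| := by
      rw [derw_key h hp0 hk ω]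
      have h2 : |derwX S (k+1) ω| = 1 := by
        rcases h.hpm (k+1) (by omega) ω with h3 | h3 <;> rw [h3] <;> norm_num
      have h4 := hb ω
      have := abs_sub_abs_le_abs_sub (derwX S (k+1) ω)
        (α (k+1) * (2*p-1) / (k:ℝ) * S k ω + (1 - α (k+1)) * (2 * β (k+1) - 1))
      rw [h2] at this
      linarith
    rw [abs_mul, abs_of_pos hpos] at h1
    rw [div_le_iff₀ hpos, mul_comm]
    exact h1
  calc ε ^ 2 / derwa p α (k+1) ^ 2 = ∫ _ω, (ε / derwa p α (k+1)) ^ 2 ∂μ := by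
        rw [integral_const]; simp [div_pow]
    _ ≤ ∫ ω, derwY μ p α S (k+1) ω ^ 2 ∂μ := by
        refine integral_mono (integrable_const _) (derwYsq_int h hp0 hp1 (k+1)) fun ω => ?_
        calc (ε / derwa p α (k+1)) ^ 2 ≤ |derwY μ p α S (k+1) ω| ^ 2 :=
              pow_le_pow_left₀ (by positivity) (hkey ω) 2
          _ = derwY μ p α S (k+1) ω ^ 2 := sq_abs _

end AuxY
section AuxEps

set_option linter.unusedSectionVars false

lemma derw_ineq1 {p a b s : ℝ} (hp : 3/4 < p) (hp1 : p < 1) (ha : 0 ≤ a) (ha1 : a ≤ 1)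
    (hb : 0 ≤ b) (hb1 : b ≤ 1) (ha2 : 1/2 ≤ a) (hs : |s| ≤ 1) :
    |a * (2*p-1) * s + (1-a) * (2*b-1)| ≤ 1 - (1-p) := by
  obtain ⟨hs1, hs2⟩ := abs_le.1 hs
  rw [abs_le]
  constructor
  · nlinarith [mul_nonneg (mul_nonneg ha (by linarith : (0:ℝ) ≤ 2*p-1)) (by linarith : (0:ℝ) ≤ s+1),
      mul_nonneg (by linarith : (0:ℝ) ≤ 1-a) (by linarith : (0:ℝ) ≤ 2*b),
      mul_nonneg (by linarith : (0:ℝ) ≤ a - 1/2) (by linarith : (0:ℝ) ≤ 1-p)]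
  · nlinarith [mul_nonneg (mul_nonneg ha (by linarith : (0:ℝ) ≤ 2*p-1)) (by linarith : (0:ℝ) ≤ 1-s),
      mul_nonneg (by linarith : (0:ℝ) ≤ 1-a) (by linarith : (0:ℝ) ≤ 2-2*b),
      mul_nonneg (by linarith : (0:ℝ) ≤ a - 1/2) (by linarith : (0:ℝ) ≤ 1-p)]

lemma derw_ineq2 {a b s A B b₀ ε : ℝ} (ha : 0 ≤ a) (hA : a < A) (hA1 : A < 1)
    (hb₀ : 0 < b₀) (hbb : b₀ < b) (hB : b < B) (hB1 : B < 1) (hs : |s| ≤ 1)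
    (hε1 : ε ≤ 2*(1-A)*(1-B)) (hε2 : ε ≤ 2*(1-A)*b₀) :
    |a * s + (1-a) * (2*b-1)| ≤ 1 - ε := by
  obtain ⟨hs1, hs2⟩ := abs_le.1 hs
  rw [abs_le]
  constructor
  · nlinarith [mul_nonneg ha (by linarith : (0:ℝ) ≤ s+1),
      mul_nonneg (by linarith : (0:ℝ) ≤ A - a) (by linarith : (0:ℝ) ≤ b),
      mul_nonneg (by linarith : (0:ℝ) ≤ 1 - A) (by linarith : (0:ℝ) ≤ b - b₀)]
  · nlinarith [mul_nonneg ha (by linarith : (0:ℝ) ≤ 1-s),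
      mul_nonneg (by linarith : (0:ℝ) ≤ A - a) (by linarith : (0:ℝ) ≤ 1-b),
      mul_nonneg (by linarith : (0:ℝ) ≤ 1 - A) (by linarith : (0:ℝ) ≤ B - b)]

variable {Ω : Type*} {m0 : MeasurableSpace Ω} {μ : Measure Ω} [IsProbabilityMeasure μ]
  {p q : ℝ} {α β : ℕ → ℝ} {S : ℕ → Ω → ℝ}

lemma derw_eps (h : IsDERW μ p q α β S)
    (hcond : ((3 / 4 < p ∧ p < 1 ∧ 1 / (4 * p - 2) < Filter.liminf α Filter.atTop) ∨
      (p = 1 ∧ 1 / (4 * p - 2) < Filter.liminf α Filter.atTop ∧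
        Filter.limsup α Filter.atTop < 1 ∧
        0 < Filter.liminf β Filter.atTop ∧
        Filter.limsup β Filter.atTop
          < (1 - Filter.limsup α Filter.atTop) / (1 - Filter.liminf α Filter.atTop)))) :
    ∃ ε : ℝ, 0 < ε ∧ ∀ᶠ k in Filter.atTop, ∀ ω,
      |α (k+1) * (2*p-1) / (k:ℝ) * S k ω + (1 - α (k+1)) * (2 * β (k+1) - 1)| ≤ 1 - ε := by
  have hαbdd : Filter.IsBoundedUnder (· ≤ ·) Filter.atTop α :=
    Filter.isBoundedUnder_of ⟨1, fun n => (h.hα n).2⟩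
  have hαbdd' : Filter.IsBoundedUnder (· ≥ ·) Filter.atTop α :=
    Filter.isBoundedUnder_of ⟨0, fun n => (h.hα n).1⟩
  have hβbdd : Filter.IsBoundedUnder (· ≤ ·) Filter.atTop β :=
    Filter.isBoundedUnder_of ⟨1, fun n => (h.hβ n).2⟩
  have hβbdd' : Filter.IsBoundedUnder (· ≥ ·) Filter.atTop β :=
    Filter.isBoundedUnder_of ⟨0, fun n => (h.hβ n).1⟩
  rcases hcond with ⟨hp34, hp1, hlim⟩ | ⟨hp1, hlim, hsup, hinfβ, hsupβ⟩
  · -- Case I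
    refine ⟨1 - p, by linarith, ?_⟩
    have h12 : (1:ℝ)/2 < Filter.liminf α Filter.atTop := by
      have h42 : (1:ℝ) < 4 * p - 2 := by linarith
      have : (1:ℝ)/2 < 1 / (4 * p - 2) := by
        rw [div_lt_div_iff₀ (by norm_num) (by linarith)]
        linarith
      linarith
    have hev : ∀ᶠ k in Filter.atTop, (1:ℝ)/2 < α k :=
      Filter.eventually_lt_of_lt_liminf h12 hαbdd'
    have hev' : ∀ᶠ k in Filter.atTop, (1:ℝ)/2 < α (k+1) := by
      obtain ⟨N, hN⟩ := Filter.eventually_atTop.1 hev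
      exact Filter.eventually_atTop.2 ⟨N, fun k hk => hN (k+1) (le_trans hk (Nat.le_succ k))⟩
    filter_upwards [hev', Filter.eventually_ge_atTop 1] with k hk hk1 ω
    have hkpos : (0:ℝ) < (k:ℝ) := by exact_mod_cast hk1
    have hs : |S k ω / (k:ℝ)| ≤ 1 := by
      rw [abs_div, abs_of_pos hkpos, div_le_one hkpos]
      exact derwS_abs_le h k ω
    have heq : α (k+1) * (2*p-1) / (k:ℝ) * S k ω = α (k+1) * (2*p-1) * (S k ω / (k:ℝ)) := by
      ring
    rw [heq]
    exact derw_ineq1 hp34 hp1 (h.hα (k+1)).1 (h.hα (k+1)).2 (h.hβ (k+1)).1 (h.hβ (k+1)).2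
      hk.le hs
  · -- Case II : p = 1
    subst hp1
    norm_num at hlim
    set L := Filter.liminf α Filter.atTop with hL
    set U := Filter.limsup α Filter.atTop with hU
    set V := Filter.limsup β Filter.atTop with hV
    set W := Filter.liminf β Filter.atTop with hW
    have hLU : L ≤ U := Filter.liminf_le_limsup hαbdd hαbdd'
    have hL1 : L < 1 := lt_of_le_of_lt hLU hsup
    have hV1 : V < 1 := by
      have hle : (1 - U) / (1 - L) ≤ 1 := by
        rw [div_le_one (by linarith)]
        linarith
      linarith
    set A := (U + 1) / 2 with hA
    set B := (V + 1) / 2 with hB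
    set b₀ := W / 2 with hb₀
    have hUA : U < A := by rw [hA]; linarith
    have hA1 : A < 1 := by rw [hA]; linarith
    have hVB : V < B := by rw [hB]; linarith
    have hB1 : B < 1 := by rw [hB]; linarith
    have hb₀pos : 0 < b₀ := by rw [hb₀]; linarith
    have hb₀W : b₀ < W := by rw [hb₀]; linarith
    set ε := min (2*(1-A)*(1-B)) (2*(1-A)*b₀) with hε
    have hεpos : 0 < ε := by
      have h1 : 0 < 2*(1-A)*(1-B) := by nlinarith
      have h2 : 0 < 2*(1-A)*b₀ := by nlinarith
      exact lt_min h1 h2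
    refine ⟨ε, hεpos, ?_⟩
    have hevA : ∀ᶠ k in Filter.atTop, α k < A := Filter.eventually_lt_of_limsup_lt hUA hαbdd
    have hevB : ∀ᶠ k in Filter.atTop, β k < B := Filter.eventually_lt_of_limsup_lt hVB hβbdd
    have hevb : ∀ᶠ k in Filter.atTop, b₀ < β k := Filter.eventually_lt_of_lt_liminf hb₀W hβbdd'
    have hshift : ∀ᶠ k in Filter.atTop, α (k+1) < A ∧ β (k+1) < B ∧ b₀ < β (k+1) := by
      obtain ⟨N, hN⟩ := Filter.eventually_atTop.1 (hevA.and (hevB.and hevb))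
      refine Filter.eventually_atTop.2 ⟨N, fun k hk => ?_⟩
      obtain ⟨h1, h2, h3⟩ := hN (k+1) (le_trans hk (Nat.le_succ k))
      exact ⟨h1, h2, h3⟩
    filter_upwards [hshift, Filter.eventually_ge_atTop 1] with k hk hk1 ω
    obtain ⟨hkA, hkB, hkb⟩ := hk
    have hkpos : (0:ℝ) < (k:ℝ) := by exact_mod_cast hk1
    have hs : |S k ω / (k:ℝ)| ≤ 1 := by
      rw [abs_div, abs_of_pos hkpos, div_le_one hkpos]
      exact derwS_abs_le h k ω
    have heq : α (k+1) * (2*(1:ℝ)-1) / (k:ℝ) * S k ω + (1 - α (k+1)) * (2 * β (k+1) - 1)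
        = α (k+1) * (S k ω / (k:ℝ)) + (1 - α (k+1)) * (2 * β (k+1) - 1) := by
      ring
    rw [heq]
    exact derw_ineq2 (h.hα (k+1)).1 hkA hA1 hb₀pos hkb hkB hB1 hs (min_le_left _ _)
      (min_le_right _ _)

end AuxEps
section AuxSum

set_option linter.unusedSectionVars false

variable {Ω : Type*} {m0 : MeasurableSpace Ω} {μ : Measure Ω} [IsProbabilityMeasure μ]
  {p q : ℝ} {α β : ℕ → ℝ} {S : ℕ → Ω → ℝ}

lemma derw_g_summable (h : IsDERW μ p q α β S) (hp0 : 0 ≤ 2 * p - 1) (hp1 : 2 * p - 1 ≤ 1)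
    {r : ℝ} (hr2 : 1 < 2 * r) (hr1 : r ≤ 1) {N : ℕ} (hN : 1 ≤ N)
    (hev : ∀ k, N ≤ k → r ≤ (2 * p - 1) * α (k + 1)) :
    Summable (fun j : ℕ => ∫ ω, derwY μ p α S j ω ^ 2 ∂μ) := by
  have hr0 : 0 ≤ r := by linarith
  have hNpos : (0:ℝ) < (N:ℝ) := by exact_mod_cast hN
  have hNr : (0:ℝ) < (N:ℝ) ^ r := Real.rpow_pos_of_pos hNpos r
  rw [← summable_nat_add_iff N]
  have hsummable : Summable (fun j : ℕ => (9 * (N:ℝ) ^ (2*r)) * ((((j + N : ℕ)):ℝ) ^ (2*r))⁻¹) :=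
    ((summable_nat_add_iff N).2 (Real.summable_nat_rpow_inv.2 hr2)).mul_left _
  refine Summable.of_nonneg_of_le (fun j => derwYsq_nonneg _) (fun j => ?_) hsummable
  set x : ℝ := ((j + N : ℕ) : ℝ) with hxdef
  have hx : (0:ℝ) < x := by
    rw [hxdef]
    exact_mod_cast (by omega : (0:ℕ) < j + N)
  have hxr : (0:ℝ) < x ^ r := Real.rpow_pos_of_pos hx r
  have h1 : x ^ r / (N:ℝ) ^ r ≤ derwa p α (j + N) := by
    have hge := derwa_ge_rpow hp0 h.hα hr0 hr1 hN hev (j + N) (by omega)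
    have haN : 1 ≤ derwa p α N := derwa_one_le hp0 h.hα N
    have hfac : 0 ≤ x ^ r / (N:ℝ) ^ r := by positivity
    nlinarith [hge, mul_le_mul_of_nonneg_right haN hfac]
  have hpos := derwa_pos hp0 h.hα (j + N)
  have h2 : (x ^ r / (N:ℝ) ^ r) ^ 2 ≤ derwa p α (j + N) ^ 2 :=
    pow_le_pow_left₀ (by positivity) h1 2
  calc ∫ ω, derwY μ p α S (j + N) ω ^ 2 ∂μ
      ≤ 9 / derwa p α (j + N) ^ 2 := derwYsq_le h hp0 hp1 (by omega)
    _ ≤ 9 / (x ^ r / (N:ℝ) ^ r) ^ 2 :=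
        div_le_div_of_nonneg_left (by norm_num) (by positivity) h2
    _ = (9 * (N:ℝ) ^ (2*r)) * (x ^ (2*r))⁻¹ := by
        have e1 : (x ^ r) ^ 2 = x ^ (2*r) := by
          rw [sq, ← Real.rpow_add hx, show r + r = 2*r by ring]
        have e2 : ((N:ℝ) ^ r) ^ 2 = (N:ℝ) ^ (2*r) := by
          rw [sq, ← Real.rpow_add hNpos, show r + r = 2*r by ring]
        have hx2 : (0:ℝ) < x ^ (2*r) := Real.rpow_pos_of_pos hx _
        rw [div_pow, e1, e2]
        field_simp

lemma derw_ssq_lower (h : IsDERW μ p q α β S) (hp0 : 0 ≤ 2 * p - 1) (hp1 : 2 * p - 1 ≤ 1)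
    {ε : ℝ} (hε : 0 < ε) {N₂ : ℕ}
    (hb : ∀ k, N₂ ≤ k → ∀ ω,
      |α (k+1) * (2*p-1) / (k:ℝ) * S k ω + (1 - α (k+1)) * (2 * β (k+1) - 1)| ≤ 1 - ε)
    (hgsum : Summable (fun j : ℕ => ∫ ω, derwY μ p α S j ω ^ 2 ∂μ))
    {n : ℕ} (hn1 : 1 ≤ n) (hn2 : N₂ ≤ n) :
    ((n:ℝ) + 1) * (ε^2 / (4 * derwa p α (n+1) ^ 2)) ≤ derwssq μ p α S (n+1) := by
  have hsum' : Summable (fun k : ℕ => ∫ ω, derwY μ p α S ((n+1) + k) ω ^ 2 ∂μ) := by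
    have h1 := (summable_nat_add_iff (n+1)).2 hgsum
    refine h1.congr fun k => ?_
    simp [add_comm]
  have hterm : ∀ k ∈ Finset.range (n+1),
      ε^2 / (4 * derwa p α (n+1) ^ 2) ≤ ∫ ω, derwY μ p α S ((n+1) + k) ω ^ 2 ∂μ := by
    intro k hk
    have hkn : k ≤ n := by simpa [Nat.lt_succ_iff] using Finset.mem_range.1 hk
    have hj : (n+1) + k = (n+k) + 1 := by omega
    rw [hj]
    have hge := derwYsq_ge h hp0 hp1 (k := n + k) (by omega) hε (hb (n+k) (by omega))
    refine le_trans ?_ hge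
    -- ε^2/(4 a(n+1)^2) ≤ ε^2 / a(n+k+1)^2
    have hpos1 := derwa_pos hp0 h.hα (n+1)
    have hpos2 := derwa_pos hp0 h.hα ((n+k)+1)
    have hle : derwa p α ((n+k)+1) ≤ 2 * derwa p α (n+1) := by
      have h2 := derwa_le_mul hp1 hp0 h.hα (n := n+1) (by omega) k
      have hcast : ((n+1+k : ℕ) : ℝ) ≤ 2 * ((n+1 : ℕ) : ℝ) := by
        push_cast; push_cast at hkn ⊢; linarith [(by exact_mod_cast hkn : (k:ℝ) ≤ (n:ℝ))]
      have hn1' : (0:ℝ) < ((n+1 : ℕ) : ℝ) := by positivity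
      calc derwa p α ((n+k)+1) = derwa p α ((n+1) + k) := by rw [show (n+k)+1 = (n+1)+k by omega]
        _ ≤ derwa p α (n+1) * ((n+1+k : ℕ) : ℝ) / ((n+1 : ℕ) : ℝ) := h2
        _ ≤ 2 * derwa p α (n+1) := by
            rw [div_le_iff₀ hn1']
            calc derwa p α (n+1) * ((n+1+k : ℕ) : ℝ)
                ≤ derwa p α (n+1) * (2 * ((n+1 : ℕ) : ℝ)) :=
                  mul_le_mul_of_nonneg_left hcast hpos1.le
              _ = 2 * derwa p α (n+1) * ((n+1 : ℕ) : ℝ) := by ring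
    have hsq : derwa p α ((n+k)+1) ^ 2 ≤ 4 * derwa p α (n+1) ^ 2 := by
      calc derwa p α ((n+k)+1) ^ 2 ≤ (2 * derwa p α (n+1)) ^ 2 :=
            pow_le_pow_left₀ hpos2.le hle 2
        _ = 4 * derwa p α (n+1) ^ 2 := by ring
    exact div_le_div_of_nonneg_left (by positivity) (by positivity) hsq
  calc ((n:ℝ) + 1) * (ε^2 / (4 * derwa p α (n+1) ^ 2))
      = ∑ _k ∈ Finset.range (n+1), ε^2 / (4 * derwa p α (n+1) ^ 2) := by
        rw [Finset.sum_const, Finset.card_range]; push_cast; ring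
    _ ≤ ∑ k ∈ Finset.range (n+1), ∫ ω, derwY μ p α S ((n+1) + k) ω ^ 2 ∂μ :=
        Finset.sum_le_sum hterm
    _ ≤ ∑' k : ℕ, ∫ ω, derwY μ p α S ((n+1) + k) ω ^ 2 ∂μ :=
        Summable.sum_le_tsum _ (fun k _ => derwYsq_nonneg _) hsum'
    _ = derwssq μ p α S (n+1) := rfl

end AuxSum
theorem derw_summable_inv_ssq_a (h : IsDERW μ p q α β S)
    (hcond : ((3 / 4 < p ∧ p < 1 ∧ 1 / (4 * p - 2) < liminf α atTop) ∨
      (p = 1 ∧ 1 / (4 * p - 2) < liminf α atTop ∧ limsup α atTop < 1 ∧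
        0 < liminf β atTop ∧
        limsup β atTop < (1 - limsup α atTop) / (1 - liminf α atTop)))) :
    Summable fun n : ℕ => 1 / (derwssq μ p α S (n + 1) ^ 2 * derwa p α (n + 1) ^ 4) := by
  classical
  have hp34 : 3/4 < p := by
    rcases hcond with ⟨h1, _⟩ | ⟨h1, _⟩
    · exact h1
    · rw [h1]; norm_num
  have hptop : p ≤ 1 := h.hp.2
  have hp0 : 0 ≤ 2*p - 1 := by linarith
  have hp0' : 0 < 2*p - 1 := by linarith
  have hp1 : 2*p - 1 ≤ 1 := by linarith
  have hp42 : (0:ℝ) < 4*p - 2 := by linarith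
  have hlim : 1 / (4*p - 2) < liminf α atTop := by
    rcases hcond with ⟨_, _, h1⟩ | ⟨_, h1, _⟩ <;> exact h1
  set L := liminf α atTop with hLdef
  have hαbdd : Filter.IsBoundedUnder (· ≤ ·) Filter.atTop α :=
    Filter.isBoundedUnder_of ⟨1, fun n => (h.hα n).2⟩
  have hαbdd' : Filter.IsBoundedUnder (· ≥ ·) Filter.atTop α :=
    Filter.isBoundedUnder_of ⟨0, fun n => (h.hα n).1⟩
  have hL : 1/2 < (2*p - 1) * L := by
    have h2 := (div_lt_iff₀ hp42).1 hlim
    nlinarith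
  -- choose exponent r
  set r := (1/2 + min ((2*p - 1) * L) 1) / 2 with hrdef
  have hrmin : 1/2 < min ((2*p - 1) * L) 1 := lt_min hL (by norm_num)
  have hr2 : 1 < 2 * r := by rw [hrdef]; linarith
  have hr1 : r ≤ 1 := by
    have := min_le_right ((2*p - 1) * L) 1
    rw [hrdef]; linarith
  have hrL : r < (2*p - 1) * L := by
    have := min_le_left ((2*p - 1) * L) 1
    rw [hrdef]; linarith
  -- eventual lower bound on α for growth
  have hevr : ∀ᶠ k in atTop, r / (2*p - 1) < α k := by
    refine Filter.eventually_lt_of_lt_liminf ?_ hαbdd'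
    rw [div_lt_iff₀ hp0']
    calc r < (2*p - 1) * L := hrL
      _ = L * (2*p - 1) := by ring
  obtain ⟨N₁, hN₁⟩ := Filter.eventually_atTop.1 hevr
  have hev : ∀ k, max N₁ 1 ≤ k → r ≤ (2*p - 1) * α (k + 1) := by
    intro k hk
    have h1 := hN₁ (k+1) (by omega)
    rw [div_lt_iff₀ hp0'] at h1
    nlinarith
  have hgsum := derw_g_summable h hp0 hp1 hr2 hr1 (N := max N₁ 1) (le_max_right _ _) hev
  -- epsilon bound
  obtain ⟨ε, hε, hevb⟩ := derw_eps h hcond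
  obtain ⟨N₂, hN₂⟩ := Filter.eventually_atTop.1 hevb
  set N₃ := max N₂ 1 with hN₃def
  rw [← summable_nat_add_iff N₃]
  have hbase : Summable (fun k : ℕ => 1 / ((k:ℝ))^2) := by
    simpa using Real.summable_one_div_nat_pow.2 (by norm_num : 1 < 2)
  have hRHS : Summable (fun j : ℕ => (16 / ε^4) * (1 / (((j + N₃ + 1 : ℕ)):ℝ)^2)) := by
    exact ((summable_nat_add_iff (N₃+1)).2 hbase).congr (fun j => by
      push_cast; ring) |>.mul_left _
  refine Summable.of_nonneg_of_le (fun j => ?_) (fun j => ?_) hRHS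
  · have ha := derwa_pos hp0 h.hα ((j + N₃) + 1)
    exact div_nonneg zero_le_one (mul_nonneg (sq_nonneg _) (by positivity))
  · set n := j + N₃ with hndef
    have hn1 : 1 ≤ n := by omega
    have hn2 : N₂ ≤ n := by omega
    have ha := derwa_pos hp0 h.hα (n+1)
    have hlow := derw_ssq_lower h hp0 hp1 hε (fun k hk ω => hN₂ k hk ω) hgsum hn1 hn2
    set c := ((n:ℝ) + 1) * (ε^2 / (4 * derwa p α (n+1) ^ 2)) with hcdef
    have hnpos : (0:ℝ) < (n:ℝ) + 1 := by positivity
    have hc : 0 < c := by rw [hcdef]; positivity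
    have hs2 : c^2 ≤ derwssq μ p α S (n+1) ^ 2 := pow_le_pow_left₀ hc.le hlow 2
    have hmul : c^2 * derwa p α (n+1) ^ 4 ≤ derwssq μ p α S (n+1) ^ 2 * derwa p α (n+1) ^ 4 :=
      mul_le_mul_of_nonneg_right hs2 (by positivity)
    have hkey : 1 / (derwssq μ p α S (n+1) ^ 2 * derwa p α (n+1) ^ 4)
        ≤ 1 / (c^2 * derwa p α (n+1) ^ 4) :=
      one_div_le_one_div_of_le (by positivity) hmul
    refine hkey.trans ?_
    have hceq : c^2 * derwa p α (n+1) ^ 4 = ((n:ℝ) + 1)^2 * ε^4 / 16 := by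
      rw [hcdef]
      field_simp
      ring
    rw [hceq]
    have hcast : (((j + N₃ + 1 : ℕ)):ℝ) = (n:ℝ) + 1 := by rw [hndef]; push_cast; ring
    rw [hcast]
    have hne : (n:ℝ) + 1 ≠ 0 := hnpos.ne'
    have hεne : ε ≠ 0 := hε.ne'
    refine le_of_eq ?_
    field_simp
end
end
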